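/- For even n = 2k and any α, β in a field F, one has α·S_n^n + β·S_n^{n-1} = β·Σ_{i=1}^{k-1} (x_{2i-1} + x_{2i})·∏_{m ∉ {2i-1,2i}} x_m + (βx_{2k-1} + βx_{2k} + αx_{2k-1}x_{2k})·∏_{m ∉ {2k-1,2k}} x_m, where S_n^j denotes the elementary symmetric polynomial of degree j in x1,...,xn. In particular, α·S_n^n + β·S_n^{n-1} is a sum of ⌈n/2⌉ read-once polynomials. -/

import Mathlib

open MvPolynomial

/-- Read-once polynomials. -/
inductive IsROP {F : Type*} [Field F] {n : ℕ} : MvPolynomial (Fin n) F → Prop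
  | leaf (a b : F) (i : Fin n) : IsROP (C a * X i + C b)
  | add (a b : F) {f g : MvPolynomial (Fin n) F} (hdisj : Disjoint f.vars g.vars)
      (hf : IsROP f) (hg : IsROP g) : IsROP (C a * (f + g) + C b)
  | mul (a b : F) {f g : MvPolynomial (Fin n) F} (hdisj : Disjoint f.vars g.vars)
      (hf : IsROP f) (hg : IsROP g) : IsROP (C a * (f * g) + C b)

/-- The elementary symmetric polynomial of degree `k` in the variables `x_i`, `i : Fin n`. -/
noncomputable def esym {F : Type*} [Field F] (n k : ℕ) : MvPolynomial (Fin n) F :=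
  ∑ A ∈ Finset.univ.powersetCard k, ∏ i ∈ A, X i

section Aux

variable {F : Type*} [Field F] {n : ℕ}

/-- Product of all variables except the one with value `j`. -/
noncomputable def gP (F : Type*) [Field F] (n : ℕ) (j : ℕ) : MvPolynomial (Fin n) F :=
  ∏ m ∈ Finset.univ.filter (fun m : Fin n => m.1 ≠ j), X m

lemma filter_ne_val (a : Fin n) :
    Finset.univ.filter (fun m : Fin n => m.1 ≠ a.1) = Finset.univ.erase a := by
  ext m; simp [Fin.ext_iff]

lemma filter_pair_eq (a b : Fin n) :
    Finset.univ.filter (fun m : Fin n => m.1 ≠ a.1 ∧ m.1 ≠ b.1)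
      = (Finset.univ.erase a).erase b := by
  ext m; simp [Fin.ext_iff]; tauto

lemma pair_expand (a b : Fin n) (hab : a ≠ b) :
    (X a + X b) * ∏ m ∈ Finset.univ.filter (fun m : Fin n => m.1 ≠ a.1 ∧ m.1 ≠ b.1), X (R := F) m
      = gP F n b.1 + gP F n a.1 := by
  rw [filter_pair_eq, add_mul, gP, gP, filter_ne_val, filter_ne_val]
  congr 1
  · rw [Finset.erase_right_comm, Finset.mul_prod_erase]
    simp [Finset.mem_erase, hab]
  · rw [Finset.mul_prod_erase]
    simp [Finset.mem_erase, Ne.symm hab]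

lemma prod_pair_expand (a b : Fin n) (hab : a ≠ b) :
    X a * X b * ∏ m ∈ Finset.univ.filter (fun m : Fin n => m.1 ≠ a.1 ∧ m.1 ≠ b.1), X (R := F) m
      = ∏ m : Fin n, X m := by
  rw [filter_pair_eq, mul_assoc, Finset.mul_prod_erase _ _ (by
    simp [Finset.mem_erase, Ne.symm hab]), Finset.mul_prod_erase _ _ (Finset.mem_univ a)]

lemma last_expand (a b : Fin n) (hab : a ≠ b) (α β : F) :
    (C β * X a + C β * X b + C α * X a * X b)
        * ∏ m ∈ Finset.univ.filter (fun m : Fin n => m.1 ≠ a.1 ∧ m.1 ≠ b.1), X m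
      = C β * (gP F n b.1 + gP F n a.1) + C α * ∏ m : Fin n, X m := by
  rw [show (C β * X a + C β * X b + C α * X a * X b)
        * ∏ m ∈ Finset.univ.filter (fun m : Fin n => m.1 ≠ a.1 ∧ m.1 ≠ b.1), X m
      = C β * ((X a + X b)
          * ∏ m ∈ Finset.univ.filter (fun m : Fin n => m.1 ≠ a.1 ∧ m.1 ≠ b.1), X m)
        + C α * (X a * X b
          * ∏ m ∈ Finset.univ.filter (fun m : Fin n => m.1 ≠ a.1 ∧ m.1 ≠ b.1), X m) by ring,
    pair_expand a b hab, prod_pair_expand a b hab]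

lemma esym_top : esym (F := F) n n = ∏ m : Fin n, X m := by
  have h : Finset.univ.powersetCard n = ({Finset.univ} : Finset (Finset (Fin n))) := by
    ext A
    simp [Finset.mem_powersetCard, ← Finset.card_eq_iff_eq_univ]
  rw [esym, h, Finset.sum_singleton]

lemma powersetCard_pred (hn : 1 ≤ n) :
    (Finset.univ : Finset (Fin n)).powersetCard (n - 1)
      = Finset.univ.image (Finset.univ.erase ·) := by
  ext A
  simp only [Finset.mem_powersetCard, Finset.mem_image, Finset.mem_univ, true_and,
    Finset.subset_univ]
  constructor
  · rintro hA
    have hss : A ⊂ Finset.univ := by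
      refine Finset.ssubset_univ_iff.mpr ?_
      intro h
      rw [h] at hA
      simp at hA
      omega
    obtain ⟨i, hi, hiA⟩ := Finset.exists_of_ssubset hss
    refine ⟨i, ?_⟩
    refine (Finset.eq_of_subset_of_card_le
      (Finset.subset_erase.mpr ⟨Finset.subset_univ A, hiA⟩) ?_).symm
    rw [Finset.card_erase_of_mem (Finset.mem_univ i)]
    simp [hA]
  · rintro ⟨i, rfl⟩
    rw [Finset.card_erase_of_mem (Finset.mem_univ i)]
    simp

lemma esym_pred (hn : 1 ≤ n) :
    esym (F := F) n (n - 1) = ∑ j ∈ Finset.range n, gP F n j := by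
  rw [esym, powersetCard_pred hn, Finset.sum_image]
  · rw [← Fin.sum_univ_eq_sum_range (gP F n) n]
    refine Finset.sum_congr rfl fun i _ => ?_
    rw [gP, filter_ne_val]
  · intro x _ y _ h
    by_contra hxy
    have : x ∈ Finset.univ.erase y := Finset.mem_erase.mpr ⟨hxy, Finset.mem_univ x⟩
    rw [← show Finset.univ.erase x = Finset.univ.erase y from h] at this
    simp at this

lemma sum_range_two_mul {M : Type*} [AddCommMonoid M] (g : ℕ → M) (k : ℕ) :
    ∑ j ∈ Finset.range (2 * k), g j = ∑ i ∈ Finset.range k, (g (2 * i) + g (2 * i + 1)) := by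
  induction k with
  | zero => simp
  | succ k ih =>
    rw [Finset.sum_range_succ, ← ih, show 2 * (k + 1) = 2 * k + 1 + 1 by ring,
      Finset.sum_range_succ, Finset.sum_range_succ, add_assoc]

lemma sum_split {M : Type*} [AddCommMonoid M] (g : ℕ → M) (k : ℕ) (hk : 1 ≤ k) :
    ∑ j ∈ Finset.range (2 * k), g j
      = (∑ i : Fin (k - 1), (g (2 * i.1 + 1) + g (2 * i.1)))
        + (g (2 * k - 1) + g (2 * k - 2)) := by
  rw [sum_range_two_mul,
    Fin.sum_univ_eq_sum_range (fun i => g (2 * i + 1) + g (2 * i)) (k - 1)]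
  obtain ⟨k', rfl⟩ : ∃ k', k = k' + 1 := ⟨k - 1, by omega⟩
  simp only [Nat.add_sub_cancel]
  rw [Finset.sum_range_succ]
  congr 1
  · exact Finset.sum_congr rfl fun i _ => add_comm _ _
  · rw [show 2 * (k' + 1) - 1 = 2 * k' + 1 by omega,
      show 2 * (k' + 1) - 2 = 2 * k' by omega, add_comm]

lemma vars_prodX (S : Finset (Fin n)) : (∏ m ∈ S, X (R := F) m).vars ⊆ S := by
  refine (vars_prod _).trans ?_
  intro x hx
  simp only [Finset.mem_biUnion] at hx
  obtain ⟨i, hi, hxi⟩ := hx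
  rw [vars_X] at hxi
  simp at hxi
  rwa [hxi]

lemma isROP_X (i : Fin n) : IsROP (X (R := F) i) := by
  have h := IsROP.leaf (1 : F) 0 i
  simpa using h

lemma isROP_prodX {S : Finset (Fin n)} (hS : S.Nonempty) : IsROP (∏ m ∈ S, X (R := F) m) := by
  induction hS using Finset.Nonempty.cons_induction with
  | singleton a => simpa using isROP_X (F := F) a
  | cons a s ha hs ih =>
    rw [Finset.prod_cons]
    have hdisj : Disjoint (X (R := F) a).vars (∏ m ∈ s, X (R := F) m).vars := by
      rw [vars_X]
      exact Finset.disjoint_left.mpr (by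
        intro x hx hx'
        simp only [Finset.mem_singleton] at hx
        exact ha (hx ▸ vars_prodX s hx'))
    have h := IsROP.mul (1 : F) 0 hdisj (isROP_X a) ih
    simpa using h

lemma isROP_pair_mul {a b : Fin n} {S : Finset (Fin n)} (hab : a ≠ b)
    (haS : a ∉ S) (hbS : b ∉ S) (hS : S.Nonempty) (β : F) :
    IsROP (C β * ((X a + X b) * ∏ m ∈ S, X (R := F) m)) := by
  have hdisjab : Disjoint (X (R := F) a).vars (X (R := F) b).vars := by
    rw [vars_X, vars_X]; simp only [Finset.disjoint_singleton]; exact hab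
  have hsum : IsROP (X (R := F) a + X b) := by
    have h := IsROP.add (1 : F) 0 hdisjab (isROP_X a) (isROP_X b)
    simpa using h
  have hdisj : Disjoint (X (R := F) a + X b).vars (∏ m ∈ S, X (R := F) m).vars := by
    refine Finset.disjoint_left.mpr fun x hx hx' => ?_
    have h1 := vars_add_subset (X (R := F) a) (X b) hx
    rw [vars_X, vars_X] at h1
    have h2 := vars_prodX S hx'
    simp only [Finset.mem_union, Finset.mem_singleton] at h1
    rcases h1 with rfl | rfl
    · exact haS h2
    · exact hbS h2
  have h := IsROP.mul β 0 hdisj hsum (isROP_prodX hS)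
  simpa using h

lemma vars_last_subset (a b : Fin n) (α β : F) :
    (C β * X a + C β * X b + C α * X a * X b).vars ⊆ {a, b} := by
  intro x hx
  have h1 := vars_add_subset (C β * X a + C β * X b) (C α * X a * X b) hx
  simp only [Finset.mem_union] at h1
  rcases h1 with h1 | h1
  · have h2 := vars_add_subset (C β * X a) (C β * X b) h1
    simp only [Finset.mem_union] at h2
    rcases h2 with h2 | h2
    · have := vars_mul (C β) (X a) h2
      simp only [vars_C, vars_X, Finset.empty_union] at this
      simp at this; simp [this]
    · have := vars_mul (C β) (X b) h2
      simp only [vars_C, vars_X, Finset.empty_union] at this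
      simp at this; simp [this]
  · have h2 := vars_mul (C α * X a) (X b) h1
    simp only [Finset.mem_union] at h2
    rcases h2 with h2 | h2
    · have := vars_mul (C α) (X a) h2
      simp only [vars_C, vars_X, Finset.empty_union] at this
      simp at this; simp [this]
    · rw [vars_X] at h2; simp at h2; simp [h2]

lemma isROP_last (a b : Fin n) (hab : a ≠ b) (α β : F) :
    IsROP (C β * X a + C β * X b + C α * X a * X b) := by
  by_cases hα : α = 0
  · subst hα
    have hdisjab : Disjoint (C β * X a + C 0).vars (C β * X b + C 0).vars := by
      refine Finset.disjoint_left.mpr fun x hx hx' => ?_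
      have h1 := vars_add_subset (C β * X a) (C 0) hx
      have h2 := vars_add_subset (C β * X b) (C 0) hx'
      simp only [vars_C, Finset.union_empty] at h1 h2
      have h1' := vars_mul (C β) (X a) h1
      have h2' := vars_mul (C β) (X b) h2
      simp only [vars_C, vars_X, Finset.empty_union, Finset.mem_singleton] at h1' h2'
      exact hab (h1' ▸ h2' ▸ rfl)
    have h := IsROP.add (1 : F) 0 hdisjab (IsROP.leaf β 0 a) (IsROP.leaf β 0 b)
    simpa using h
  · set c := β / α with hc
    have hβ : (C β : MvPolynomial (Fin n) F) = C α * C c := by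
      rw [← map_mul]
      congr 1
      rw [hc, mul_div_assoc', eq_div_iff hα, mul_comm]
    have hdisj : Disjoint (C 1 * X a + C c : MvPolynomial (Fin n) F).vars
        (C 1 * X b + C c : MvPolynomial (Fin n) F).vars := by
      refine Finset.disjoint_left.mpr fun x hx hx' => ?_
      have h1 := vars_add_subset (C 1 * X a) (C c) hx
      have h2 := vars_add_subset (C 1 * X b) (C c) hx'
      simp only [vars_C, Finset.union_empty, map_one, one_mul, vars_X,
        Finset.mem_singleton] at h1 h2
      exact hab (h1 ▸ h2 ▸ rfl)
    have h := IsROP.mul α (-(β * c)) hdisj (IsROP.leaf 1 c a) (IsROP.leaf 1 c b)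
    have heq : C α * ((C 1 * X a + C c) * (C 1 * X b + C c)) + C (-(β * c))
        = C β * X a + C β * X b + C α * X a * X (R := F) b := by
      rw [map_neg, map_mul, hβ, map_one]
      ring
    rwa [heq] at h

lemma isROP_last_mul (a b : Fin n) (hab : a ≠ b) {S : Finset (Fin n)}
    (haS : a ∉ S) (hbS : b ∉ S) (α β : F) :
    IsROP ((C β * X a + C β * X b + C α * X a * X b) * ∏ m ∈ S, X (R := F) m) := by
  by_cases hS : S.Nonempty
  · have hdisj : Disjoint (C β * X a + C β * X b + C α * X a * X b :
        MvPolynomial (Fin n) F).vars (∏ m ∈ S, X (R := F) m).vars := by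
      refine Finset.disjoint_left.mpr fun x hx hx' => ?_
      have h1 := vars_last_subset a b α β hx
      have h2 := vars_prodX S hx'
      simp only [Finset.mem_insert, Finset.mem_singleton] at h1
      rcases h1 with rfl | rfl
      · exact haS h2
      · exact hbS h2
    have h := IsROP.mul (1 : F) 0 hdisj (isROP_last a b hab α β) (isROP_prodX hS)
    simpa using h
  · rw [Finset.not_nonempty_iff_eq_empty] at hS
    rw [hS, Finset.prod_empty, mul_one]
    exact isROP_last a b hab α β

end Aux

theorem stmt15 {F : Type*} [Field F] (k : ℕ) (hk : 1 ≤ k) (α β : F) :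
    (C α * esym (2 * k) (2 * k) + C β * esym (2 * k) (2 * k - 1)
      = C β * ∑ i : Fin (k - 1),
          ((X (⟨2 * i.1, by have := i.2; omega⟩ : Fin (2 * k))
            + X (⟨2 * i.1 + 1, by have := i.2; omega⟩ : Fin (2 * k)))
            * ∏ m ∈ Finset.univ.filter
                (fun m : Fin (2 * k) => m.1 ≠ 2 * i.1 ∧ m.1 ≠ 2 * i.1 + 1), X m)
        + (C β * X (⟨2 * k - 2, by omega⟩ : Fin (2 * k))
            + C β * X (⟨2 * k - 1, by omega⟩ : Fin (2 * k))
            + C α * X (⟨2 * k - 2, by omega⟩ : Fin (2 * k))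
                * X (⟨2 * k - 1, by omega⟩ : Fin (2 * k)))
          * ∏ m ∈ Finset.univ.filter
              (fun m : Fin (2 * k) => m.1 ≠ 2 * k - 2 ∧ m.1 ≠ 2 * k - 1), X m)
    ∧ ∃ L : List (MvPolynomial (Fin (2 * k)) F),
        (∀ q ∈ L, IsROP q) ∧
        L.sum = C α * esym (2 * k) (2 * k) + C β * esym (2 * k) (2 * k - 1) ∧
        L.length ≤ k := by
  have hpair : ∀ i : Fin (k - 1),
      (X (⟨2 * i.1, by have := i.2; omega⟩ : Fin (2 * k))
        + X (⟨2 * i.1 + 1, by have := i.2; omega⟩ : Fin (2 * k)))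
        * ∏ m ∈ Finset.univ.filter
            (fun m : Fin (2 * k) => m.1 ≠ 2 * i.1 ∧ m.1 ≠ 2 * i.1 + 1), X m
      = gP F (2 * k) (2 * i.1 + 1) + gP F (2 * k) (2 * i.1) := by
    intro i
    exact pair_expand (⟨2 * i.1, by have := i.2; omega⟩ : Fin (2 * k))
      (⟨2 * i.1 + 1, by have := i.2; omega⟩ : Fin (2 * k)) (by simp [Fin.ext_iff])
  have hne : (⟨2 * k - 2, by omega⟩ : Fin (2 * k)) ≠ (⟨2 * k - 1, by omega⟩ : Fin (2 * k)) := by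
    simp [Fin.ext_iff]; omega
  have hlast : (C β * X (⟨2 * k - 2, by omega⟩ : Fin (2 * k))
        + C β * X (⟨2 * k - 1, by omega⟩ : Fin (2 * k))
        + C α * X (⟨2 * k - 2, by omega⟩ : Fin (2 * k))
            * X (⟨2 * k - 1, by omega⟩ : Fin (2 * k)))
      * ∏ m ∈ Finset.univ.filter
          (fun m : Fin (2 * k) => m.1 ≠ 2 * k - 2 ∧ m.1 ≠ 2 * k - 1), X m
      = C β * (gP F (2 * k) (2 * k - 1) + gP F (2 * k) (2 * k - 2))
        + C α * ∏ m : Fin (2 * k), X m :=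
    last_expand (⟨2 * k - 2, by omega⟩ : Fin (2 * k)) (⟨2 * k - 1, by omega⟩ : Fin (2 * k))
      hne α β
  have heq : C α * esym (2 * k) (2 * k) + C β * esym (2 * k) (2 * k - 1)
      = C β * ∑ i : Fin (k - 1),
          ((X (⟨2 * i.1, by have := i.2; omega⟩ : Fin (2 * k))
            + X (⟨2 * i.1 + 1, by have := i.2; omega⟩ : Fin (2 * k)))
            * ∏ m ∈ Finset.univ.filter
                (fun m : Fin (2 * k) => m.1 ≠ 2 * i.1 ∧ m.1 ≠ 2 * i.1 + 1), X m)
        + (C β * X (⟨2 * k - 2, by omega⟩ : Fin (2 * k))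
            + C β * X (⟨2 * k - 1, by omega⟩ : Fin (2 * k))
            + C α * X (⟨2 * k - 2, by omega⟩ : Fin (2 * k))
                * X (⟨2 * k - 1, by omega⟩ : Fin (2 * k)))
          * ∏ m ∈ Finset.univ.filter
              (fun m : Fin (2 * k) => m.1 ≠ 2 * k - 2 ∧ m.1 ≠ 2 * k - 1), X m := by
    rw [esym_top, esym_pred (by omega : 1 ≤ 2 * k),
      Finset.sum_congr rfl (fun i _ => hpair i), hlast,
      sum_split (gP F (2 * k)) k hk]
    ring
  refine ⟨heq, ?_⟩
  refine ⟨(List.ofFn fun i : Fin (k - 1) =>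
      C β * ((X (⟨2 * i.1, by have := i.2; omega⟩ : Fin (2 * k))
        + X (⟨2 * i.1 + 1, by have := i.2; omega⟩ : Fin (2 * k)))
        * ∏ m ∈ Finset.univ.filter
            (fun m : Fin (2 * k) => m.1 ≠ 2 * i.1 ∧ m.1 ≠ 2 * i.1 + 1), X m))
    ++ [(C β * X (⟨2 * k - 2, by omega⟩ : Fin (2 * k))
            + C β * X (⟨2 * k - 1, by omega⟩ : Fin (2 * k))
            + C α * X (⟨2 * k - 2, by omega⟩ : Fin (2 * k))
                * X (⟨2 * k - 1, by omega⟩ : Fin (2 * k)))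
          * ∏ m ∈ Finset.univ.filter
              (fun m : Fin (2 * k) => m.1 ≠ 2 * k - 2 ∧ m.1 ≠ 2 * k - 1), X m], ?_, ?_, ?_⟩
  · intro q hq
    rw [List.mem_append] at hq
    rcases hq with hq | hq
    · rw [List.mem_ofFn] at hq
      obtain ⟨i, rfl⟩ := hq
      refine isROP_pair_mul (a := ⟨2 * i.1, by have := i.2; omega⟩)
        (b := ⟨2 * i.1 + 1, by have := i.2; omega⟩) (by simp [Fin.ext_iff]) ?_ ?_ ?_ β
      · simp
      · simp
      · refine ⟨⟨2 * k - 2, by omega⟩, ?_⟩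
        have := i.2
        simp only [Finset.mem_filter, Finset.mem_univ, true_and]
        omega
    · rw [List.mem_singleton] at hq
      subst hq
      refine isROP_last_mul _ _ hne ?_ ?_ α β
      · simp
      · simp
  · rw [List.sum_append, List.sum_ofFn, List.sum_cons, List.sum_nil, add_zero, heq,
      Finset.mul_sum]
  · simp
    omega
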